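/- arXiv:1303.2607 — 4 statements merged into one kernel-verified Lean document; each statement's English description precedes it below -/
import Mathlib

section
/- A {0,1,-1}-matrix in which every column has at most two nonzero entries, and whose rows can be partitioned into two sets such that for every column the two nonzero entries (if of the same sign) lie in different sets and (if of opposite signs) lie in the same set, is totally unimodular. -/
open Finset Matrix

lemma signRange_iff (x : ℤ) :
    x ∈ Set.range (SignType.cast : SignType → ℤ) ↔ x = 0 ∨ x = 1 ∨ x = -1 := by
  constructor
  · rintro ⟨s, rfl⟩; cases s <;> simp
  · rintro (rfl | rfl | rfl)
    exacts [⟨0, rfl⟩, ⟨1, rfl⟩, ⟨-1, by simp⟩]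

lemma ht_key : ∀ (k : ℕ) (B : Matrix (Fin k) (Fin k) ℤ) (ε : Fin k → ℤ),
    (∀ i j, B i j = 0 ∨ B i j = 1 ∨ B i j = -1) →
    (∀ j, (Finset.univ.filter fun i => B i j ≠ 0).card ≤ 2) →
    (∀ i, ε i = 1 ∨ ε i = -1) →
    (∀ j i₁ i₂, i₁ ≠ i₂ → B i₁ j ≠ 0 → B i₂ j ≠ 0 →
      ε i₁ * B i₁ j + ε i₂ * B i₂ j = 0) →
    B.det ∈ Set.range (SignType.cast : SignType → ℤ) := by
  intro k
  induction k with
  | zero => intro B ε _ _ _ _; rw [signRange_iff]; right; left; simp [Matrix.det_fin_zero]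
  | succ k ih =>
    intro B ε hent hcol hε hcan
    by_cases hone : ∃ j, (Finset.univ.filter fun i => B i j ≠ 0).card ≤ 1
    · obtain ⟨j, hj⟩ := hone
      rw [Matrix.det_succ_column B j]
      rcases Nat.le_one_iff_eq_zero_or_eq_one.mp hj with h0 | h1
      · -- column j is zero
        have hz : ∀ i, B i j = 0 := by
          intro i
          by_contra h
          have : i ∈ Finset.univ.filter fun i => B i j ≠ 0 := by simp [h]
          rw [Finset.card_eq_zero] at h0
          simp [h0] at this
        rw [signRange_iff]; left
        apply Finset.sum_eq_zero
        intro i _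
        rw [hz i]; ring
      · obtain ⟨i₀, hi₀⟩ := Finset.card_eq_one.mp h1
        have hz : ∀ i, i ≠ i₀ → B i j = 0 := by
          intro i hi
          by_contra h
          have : i ∈ Finset.univ.filter fun i => B i j ≠ 0 := by simp [h]
          rw [hi₀, Finset.mem_singleton] at this
          exact hi this
        rw [Finset.sum_eq_single i₀ (fun i _ hi => by rw [hz i hi]; ring)
          (fun h => absurd (Finset.mem_univ i₀) h)]
        have hminor : (B.submatrix i₀.succAbove j.succAbove).det ∈
            Set.range (SignType.cast : SignType → ℤ) := by
          apply ih _ (ε ∘ i₀.succAbove)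
          · intro i j'; exact hent _ _
          · intro j'
            calc (Finset.univ.filter fun i => B.submatrix i₀.succAbove j.succAbove i j' ≠ 0).card
                ≤ (Finset.univ.filter fun i => B i (j.succAbove j') ≠ 0).card := by
                  apply Finset.card_le_card_of_injOn i₀.succAbove
                  · intro a ha; rw [Finset.mem_coe] at ha ⊢; simp at ha ⊢; exact (Finset.mem_filter.mp ha).2
                  · exact (Fin.succAbove_right_injective).injOn
              _ ≤ 2 := hcol _
          · intro i; exact hε _
          · intro j' i₁ i₂ h12 h1 h2
            exact hcan _ _ _ (fun h => h12 (Fin.succAbove_right_injective h)) h1 h2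
        rw [signRange_iff] at hminor ⊢
        have hs : (-1:ℤ)^((i₀:ℕ)+(j:ℕ)) = 1 ∨ (-1:ℤ)^((i₀:ℕ)+(j:ℕ)) = -1 := by
          rcases Nat.even_or_odd ((i₀:ℕ)+(j:ℕ)) with he | he
          · left; exact he.neg_one_pow
          · right; exact he.neg_one_pow
        rcases hent i₀ j with hB | hB | hB <;> rcases hminor with hm | hm | hm <;>
          rcases hs with hs | hs <;> rw [hB, hm, hs] <;> norm_num
    · -- every column has ≥ 2 nonzeros, hence exactly 2; det = 0
      push_neg at hone
      rw [signRange_iff]; left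
      rw [← Matrix.exists_vecMul_eq_zero_iff]
      refine ⟨ε, ?_, ?_⟩
      · intro h
        have h0 : ε 0 = 0 := congrFun h 0
        rcases hε 0 with h1 | h1 <;> rw [h1] at h0 <;> norm_num at h0
      · funext j
        have h2 : (Finset.univ.filter fun i => B i j ≠ 0).card = 2 :=
          le_antisymm (hcol j) (hone j)
        obtain ⟨i₁, i₂, h12, hset⟩ := Finset.card_eq_two.mp h2
        have h1 : B i₁ j ≠ 0 := by
          have : i₁ ∈ Finset.univ.filter fun i => B i j ≠ 0 := by
            rw [hset]; simp
          simpa using this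
        have hb2 : B i₂ j ≠ 0 := by
          have : i₂ ∈ Finset.univ.filter fun i => B i j ≠ 0 := by
            rw [hset]; simp
          simpa using this
        have hz : ∀ i, i ≠ i₁ → i ≠ i₂ → B i j = 0 := by
          intro i ha hb
          by_contra h
          have : i ∈ Finset.univ.filter fun i => B i j ≠ 0 := by simp [h]
          rw [hset] at this; simp at this; tauto
        have hsum : ∑ i ∈ Finset.univ.filter (fun i => B i j ≠ 0), ε i * B i j
            = ∑ i, ε i * B i j := by
          apply Finset.sum_filter_of_ne
          intro i _ hne hB
          exact hne (by rw [hB, mul_zero])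
        show (ε ᵥ* B) j = (0 : Fin (k+1) → ℤ) j
        have hv : (ε ᵥ* B) j = ∑ i, ε i * B i j := rfl
        rw [hv, Pi.zero_apply, ← hsum, hset, Finset.sum_pair h12]
        exact hcan j i₁ i₂ h12 h1 hb2

/-- Heller–Tompkins: a `{0, 1, -1}`-matrix in which every column has at most two
nonzero entries, whose rows can be two-partitioned (via `I : m → Bool`) so that
any two nonzero entries of a column with the same sign lie in different parts,
and any two with opposite signs lie in the same part, is totally unimodular. -/
theorem hellerTompkins_totallyUnimodular {m n : Type*} [Fintype m] [DecidableEq m]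
    (A : Matrix m n ℤ)
    (hentries : ∀ i j, A i j = 0 ∨ A i j = 1 ∨ A i j = -1)
    (hcol : ∀ j : n, (Finset.univ.filter fun i : m => A i j ≠ 0).card ≤ 2)
    (I : m → Bool)
    (hpart : ∀ (j : n) (i₁ i₂ : m), i₁ ≠ i₂ → A i₁ j ≠ 0 → A i₂ j ≠ 0 →
      (A i₁ j = A i₂ j → I i₁ ≠ I i₂) ∧ (A i₁ j ≠ A i₂ j → I i₁ = I i₂)) :
    A.IsTotallyUnimodular := by
  rw [Matrix.isTotallyUnimodular_iff]
  intro k f g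
  by_cases hf : Function.Injective f
  · apply ht_key k (A.submatrix f g) (fun i => if I (f i) then 1 else -1)
    · intro i j; exact hentries _ _
    · intro j
      apply le_trans _ (hcol (g j))
      apply Finset.card_le_card_of_injOn f
      · intro a ha
        simp only [Finset.mem_coe, Finset.mem_filter, Finset.mem_univ, true_and,
          Matrix.submatrix_apply] at ha ⊢
        exact (Finset.mem_filter.mp ha).2
      · exact hf.injOn
    · intro i; by_cases h : I (f i) <;> simp [h]
    · intro j i₁ i₂ h12 h1 h2
      simp only [Matrix.submatrix_apply] at h1 h2 ⊢
      have hne : f i₁ ≠ f i₂ := fun h => h12 (hf h)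
      obtain ⟨hsame, hdiff⟩ := hpart (g j) (f i₁) (f i₂) hne h1 h2
      rcases hentries (f i₁) (g j) with ha | ha | ha <;>
        rcases hentries (f i₂) (g j) with hb | hb | hb <;>
        first
          | exact absurd ha h1
          | exact absurd hb h2
          | (first
              | have h' := hsame (ha.trans hb.symm)
              | have h' := hdiff (by rw [ha, hb]; norm_num)) <;>
            by_cases hI1 : I (f i₁) <;> by_cases hI2 : I (f i₂) <;>
            simp_all [ha, hb]
  · rw [Function.not_injective_iff] at hf
    obtain ⟨a, b, hab, hne⟩ := hf
    rw [signRange_iff]; left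
    exact Matrix.det_zero_of_row_eq hne (by funext j; simp [Matrix.submatrix_apply, hab])
end

section
/- If A is a totally unimodular matrix and b is an integer vector, then every vertex (basic feasible solution) of the polyhedron {x : A x = b, x ≥ 0} has all integer coordinates. -/
/-- If `A` is totally unimodular and `b` is an integer vector, then every vertex
(a point of the polyhedron `{x : A x = b, x ≥ 0}` that is not a proper convex
combination of two distinct points of the polyhedron) has integer coordinates. -/
theorem vertex_of_totallyUnimodular_is_integral {m n : ℕ}
    (A : Matrix (Fin m) (Fin n) ℝ) (hA : A.IsTotallyUnimodular)
    (b : Fin m → ℝ) (hb : ∀ i, ∃ z : ℤ, b i = (z : ℝ))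
    (P : Set (Fin n → ℝ))
    (hP : P = {x : Fin n → ℝ | A.mulVec x = b ∧ ∀ j, 0 ≤ x j})
    (x : Fin n → ℝ) (hx : x ∈ P)
    (hvertex : ¬ ∃ y ∈ P, ∃ z ∈ P, y ≠ z ∧ ∃ t : ℝ, 0 < t ∧ t < 1 ∧
      x = t • y + (1 - t) • z) :
    ∀ j, ∃ k : ℤ, x j = (k : ℝ) := by
  classical
  subst hP
  obtain ⟨hxb, hx0⟩ := hx
  set S : Finset (Fin n) := Finset.univ.filter (fun j => x j ≠ 0) with hS
  set s : ℕ := S.card with hs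
  let eqS : ↥S ≃ Fin s := S.equivFin
  let e : Fin s → Fin n := fun k => ((eqS.symm k : ↥S) : Fin n)
  have he : Function.Injective e := fun k1 k2 h =>
    eqS.symm.injective (Subtype.ext h)
  have hmemS : ∀ k, e k ∈ S := fun k => (eqS.symm k).2
  have hxe : ∀ k, 0 < x (e k) := by
    intro k
    have h1 := hmemS k
    rw [hS, Finset.mem_filter] at h1
    exact lt_of_le_of_ne (hx0 _) (Ne.symm h1.2)
  have hoff : ∀ j, j ∉ Set.range e → x j = 0 := by
    intro j hj
    by_contra h
    have hjS : j ∈ S := by rw [hS]; simp [h]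
    exact hj ⟨eqS ⟨j, hjS⟩, by simp [e]⟩
  -- summing over the support
  have hsum : ∀ g : Fin n → ℝ, (∀ j, j ∉ Set.range e → g j = 0) →
      ∑ k, g (e k) = ∑ j, g j := by
    intro g hg
    have h1 : ∑ k, g (e k) = ∑ a : ↥S, g ↑a := by
      rw [← Equiv.sum_comp eqS.symm (fun a : ↥S => g ↑a)]
    have h2 : ∑ a : ↥S, g ↑a = ∑ j ∈ S, g j := Finset.sum_coe_sort S g
    rw [h1, h2]
    refine Finset.sum_subset (Finset.subset_univ S) ?_
    intro j _ hjS
    apply hg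
    rintro ⟨k, rfl⟩
    exact hjS (hmemS k)
  have hMx : ∀ i, ∑ k, A i (e k) * x (e k) = b i := by
    intro i
    have := hsum (fun j => A i j * x j) (fun j hj => by simp [hoff j hj])
    rw [this]
    have := congr_fun hxb i
    simpa [Matrix.mulVec, dotProduct] using this
  -- the columns indexed by the support are linearly independent
  have hker : ∀ c : Fin s → ℝ, (∀ i, ∑ k, A i (e k) * c k = 0) → c = 0 := by
    intro c hc
    by_contra hc0
    obtain ⟨k0, hk0⟩ := Function.ne_iff.mp hc0
    simp only [Pi.zero_apply] at hk0
    -- extend c by zero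
    let d : Fin n → ℝ := fun j => if h : ∃ k, e k = j then c h.choose else 0
    have hd_e : ∀ k, d (e k) = c k := by
      intro k
      have hex : ∃ k', e k' = e k := ⟨k, rfl⟩
      have : d (e k) = c hex.choose := dif_pos hex
      rw [this, he hex.choose_spec]
    have hd_off : ∀ j, j ∉ Set.range e → d j = 0 := by
      intro j hj
      have : ¬ ∃ k, e k = j := fun ⟨k, hk⟩ => hj ⟨k, hk⟩
      exact dif_neg this
    have hAd : ∀ i, ∑ j, A i j * d j = 0 := by
      intro i
      rw [← hsum (fun j => A i j * d j) (fun j hj => by simp [hd_off j hj])]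
      simp only [hd_e]
      exact hc i
    have hNe : (Finset.univ : Finset (Fin s)).Nonempty := ⟨k0, Finset.mem_univ k0⟩
    set ε : ℝ := Finset.univ.inf' hNe (fun k => x (e k) / (|c k| + 1)) with hε
    have hεpos : 0 < ε := by
      rw [hε]
      apply Finset.lt_inf'_iff hNe |>.mpr
      intro k _
      exact div_pos (hxe k) (by positivity)
    have hbound : ∀ k, ε * |c k| ≤ x (e k) := by
      intro k
      have h1 : ε ≤ x (e k) / (|c k| + 1) :=
        Finset.inf'_le _ (Finset.mem_univ k)
      have h2 : (0:ℝ) < |c k| + 1 := by positivity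
      have h3 : ε * (|c k| + 1) ≤ x (e k) := by
        rw [← le_div_iff₀ h2]; exact h1
      nlinarith [abs_nonneg (c k), hεpos.le]
    set y : Fin n → ℝ := x + ε • d with hy
    set z : Fin n → ℝ := x - ε • d with hz
    have hAdvec : A.mulVec d = 0 := by
      funext i
      simpa [Matrix.mulVec, dotProduct] using hAd i
    have hyP : A.mulVec y = b ∧ ∀ j, 0 ≤ y j := by
      constructor
      · rw [hy, Matrix.mulVec_add, Matrix.mulVec_smul, hAdvec]
        simp [hxb]
      · intro j
        by_cases hj : ∃ k, e k = j
        · obtain ⟨k, rfl⟩ := hj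
          have := hbound k
          have h4 : -(ε * |c k|) ≤ ε * c k := by
            have := neg_abs_le (c k)
            nlinarith [hεpos.le]
          simp only [hy, Pi.add_apply, Pi.smul_apply, smul_eq_mul, hd_e]
          linarith
        · have : d j = 0 := hd_off j (by rintro ⟨k, rfl⟩; exact hj ⟨k, rfl⟩)
          simp [hy, this, hx0 j]
    have hzP : A.mulVec z = b ∧ ∀ j, 0 ≤ z j := by
      constructor
      · rw [hz, Matrix.mulVec_sub, Matrix.mulVec_smul, hAdvec]
        simp [hxb]
      · intro j
        by_cases hj : ∃ k, e k = j
        · obtain ⟨k, rfl⟩ := hj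
          have := hbound k
          have h4 : ε * c k ≤ ε * |c k| := by
            have := le_abs_self (c k)
            nlinarith [hεpos.le]
          simp only [hz, Pi.sub_apply, Pi.smul_apply, smul_eq_mul, hd_e]
          linarith
        · have : d j = 0 := hd_off j (by rintro ⟨k, rfl⟩; exact hj ⟨k, rfl⟩)
          simp [hz, this, hx0 j]
    apply hvertex
    refine ⟨y, hyP, z, hzP, ?_, 1/2, by norm_num, by norm_num, ?_⟩
    · intro hyz
      have := congr_fun hyz (e k0)
      simp only [hy, hz, Pi.add_apply, Pi.sub_apply, Pi.smul_apply, smul_eq_mul,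
        hd_e] at this
      have : ε * c k0 = 0 := by linarith
      rcases mul_eq_zero.mp this with h | h
      · exact absurd h hεpos.ne'
      · exact hk0 h
    · funext j
      simp only [Pi.add_apply, Pi.smul_apply, hy, hz, Pi.sub_apply, smul_eq_mul]
      ring
  -- the submatrix M of columns on the support
  set M : Matrix (Fin m) (Fin s) ℝ := A.submatrix id e with hM
  have hMker : LinearMap.ker M.mulVecLin = ⊥ := by
    rw [Matrix.ker_mulVecLin_eq_bot_iff]
    intro c hc
    apply hker
    intro i
    have := congr_fun hc i
    simpa [hM, Matrix.mulVec, dotProduct] using this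
  have hMinj : Function.Injective M.mulVecLin := LinearMap.ker_eq_bot.mp hMker
  have hrank : M.rank = s := by
    rw [Matrix.rank, LinearMap.finrank_range_of_inj hMinj]
    simp
  have hspan : Submodule.span ℝ (Set.range M) = ⊤ := by
    apply Submodule.eq_top_of_finrank_eq
    rw [show Set.range M = Set.range M.row from rfl, ← Matrix.rank_eq_finrank_span_row, hrank]
    simp
  obtain ⟨t, htsub, htspan, htlin⟩ := exists_linearIndependent ℝ (Set.range M)
  rw [hspan] at htspan
  have htfin : t.Finite := by
    have : Finite ↥t := htlin.finite
    exact t.toFinite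
  haveI : Fintype ↥t := htfin.fintype
  have hcard : Fintype.card ↥t = s := by
    have h1 := finrank_span_set_eq_card htlin
    rw [htspan] at h1
    simp only [finrank_top] at h1
    rw [Set.toFinset_card] at h1
    rw [← h1]
    simp
  let g : Fin s ≃ ↥t := (Fintype.equivFinOfCardEq hcard).symm
  let f : Fin s → Fin m := fun k => (htsub (g k).2).choose
  have hf : ∀ k, M (f k) = ((g k : Fin s → ℝ)) := fun k => (htsub (g k).2).choose_spec
  have hfinj : Function.Injective f := by
    intro k1 k2 h
    have : M (f k1) = M (f k2) := by rw [h]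
    rw [hf, hf] at this
    exact g.injective (Subtype.ext this)
  set B : Matrix (Fin s) (Fin s) ℝ := A.submatrix f e with hB
  have hBrow : ∀ k, B k = M (f k) := fun k => rfl
  have hBlin : LinearIndependent ℝ (fun k => B k) := by
    have heq : (fun k => B k) = (fun a : ↥t => (a : Fin s → ℝ)) ∘ g := by
      funext k
      rw [hBrow, hf]
      rfl
    rw [heq]
    exact htlin.comp g g.injective
  have hBunit : IsUnit B := Matrix.linearIndependent_rows_iff_isUnit.mp hBlin
  have hBdet : B.det ≠ 0 := ((Matrix.isUnit_iff_isUnit_det B).mp hBunit).ne_zero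
  have hBdet1 : B.det = 1 ∨ B.det = -1 := by
    obtain ⟨sg, hsg⟩ := hA s f e hfinj he
    rw [← hB] at hsg
    cases sg with
    | zero => exact absurd hsg.symm (by simpa using hBdet)
    | pos => left; rw [← hsg]; simp
    | neg => right; rw [← hsg]; simp
  -- B * xS = b ∘ f
  set xS : Fin s → ℝ := fun k => x (e k) with hxS
  have hBx : B.mulVec xS = b ∘ f := by
    funext k
    simp only [Matrix.mulVec, dotProduct, hB, Matrix.submatrix_apply, Function.comp_apply]
    exact hMx (f k)
  have hcramer : B.det • xS = (Matrix.adjugate B).mulVec (b ∘ f) := by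
    rw [← hBx, Matrix.mulVec_mulVec, Matrix.adjugate_mul, Matrix.smul_mulVec,
      Matrix.one_mulVec]
  -- integrality
  have hAint : ∀ i j, ∃ zz : ℤ, A i j = (zz : ℝ) := by
    intro i j
    obtain ⟨sg, hsg⟩ := hA.apply i j
    exact ⟨(sg : ℤ), by rw [← hsg]; cases sg <;> simp⟩
  let zA : Matrix (Fin m) (Fin n) ℤ := fun i j => (hAint i j).choose
  have hzA : ∀ i j, A i j = ((zA i j : ℤ) : ℝ) := fun i j => (hAint i j).choose_spec
  have hmap : (Int.castRingHom ℝ).mapMatrix (zA.submatrix f e) = B := by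
    ext k l
    simp [hB, hzA]
  have hadjint : ∀ k i, ∃ zz : ℤ, Matrix.adjugate B k i = (zz : ℝ) := by
    intro k i
    refine ⟨Matrix.adjugate (zA.submatrix f e) k i, ?_⟩
    rw [← hmap, ← RingHom.map_adjugate]
    simp
  intro j
  by_cases hj : ∃ k, e k = j
  · obtain ⟨k, rfl⟩ := hj
    have hsum2 : ∃ Z : ℤ, ((Matrix.adjugate B).mulVec (b ∘ f)) k = (Z : ℝ) := by
      refine ⟨∑ i, (hadjint k i).choose * (hb (f i)).choose, ?_⟩
      simp only [Matrix.mulVec, dotProduct, Function.comp_apply]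
      push_cast
      refine Finset.sum_congr rfl ?_
      intro i _
      show B.adjugate k i * b (f i) = _
      rw [← (hadjint k i).choose_spec, ← (hb (f i)).choose_spec]
    obtain ⟨Z, hZ⟩ := hsum2
    have hdx : B.det * x (e k) = (Z : ℝ) := by
      have := congr_fun hcramer k
      simpa [hxS, hZ] using this
    rcases hBdet1 with h | h
    · exact ⟨Z, by rw [h, one_mul] at hdx; exact hdx⟩
    · exact ⟨-Z, by rw [h] at hdx; push_cast; linarith⟩
  · exact ⟨0, by rw [hoff j (by rintro ⟨k, rfl⟩; exact hj ⟨k, rfl⟩)]; simp⟩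
end

section
/- The LP relaxation of the generalized assignment problem attains its optimum at an integral point; hence GAP has an integral optimal solution whenever it is feasible. -/
private lemma gap_sum_comm3 {α β γ : Type*} [Fintype α] [Fintype β] [Fintype γ]
    (f : α → β → γ → ℝ) :
    ∑ a, ∑ b, ∑ c, f a b c = ∑ c, ∑ a, ∑ b, f a b c := by
  calc ∑ a, ∑ b, ∑ c, f a b c = ∑ a, ∑ c, ∑ b, f a b c :=
        Finset.sum_congr rfl fun a _ => Finset.sum_comm
    _ = ∑ c, ∑ a, ∑ b, f a b c := Finset.sum_comm


/-- The LP relaxation of GAP attains its optimum at an integral point: over the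
polytope of `x ∈ [0,1]^{F_l×F_r×L}` satisfying the one-to-one matching equality
constraints, the linear objective is minimized at some `x` with all coordinates
in `{0,1}` — hence a feasible GAP has an integral optimal solution. -/
theorem gap_lp_relaxation_integral_optimum {n m : ℕ} (hm : 1 ≤ m)
    (D : Fin n → Fin n → Fin m → ℝ)
    (Feas : (Fin n → Fin n → Fin m → ℝ) → Prop)
    (hFeas : Feas = fun x =>
      (∀ p q h, 0 ≤ x p q h ∧ x p q h ≤ 1) ∧
      (∀ q : Fin n, ∑ h : Fin m, ∑ p : Fin n, x p q h = 1) ∧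
      (∀ p : Fin n, ∑ h : Fin m, ∑ q : Fin n, x p q h = 1))
    (hfeasible : ∃ x, Feas x) :
    ∃ x, Feas x ∧ (∀ p q h, x p q h = 0 ∨ x p q h = 1) ∧
      ∀ y, Feas y →
        (∑ h : Fin m, ∑ p : Fin n, ∑ q : Fin n, D p q h * x p q h) ≤
        (∑ h : Fin m, ∑ p : Fin n, ∑ q : Fin n, D p q h * y p q h) := by
  have hmne : Nonempty (Fin m) := ⟨⟨0, hm⟩⟩
  -- c p q = min over h of D p q h
  set c : Fin n → Fin n → ℝ := fun p q => Finset.univ.inf' Finset.univ_nonempty (D p q)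
    with hc
  have hcle : ∀ p q h, c p q ≤ D p q h := fun p q h =>
    Finset.inf'_le _ (Finset.mem_univ h)
  have hsel : ∀ p q : Fin n, ∃ h : Fin m, D p q h = c p q := by
    intro p q
    obtain ⟨h, _, hh⟩ := Finset.exists_mem_eq_inf' Finset.univ_nonempty (D p q)
    exact ⟨h, hh.symm⟩
  choose g hg using hsel
  -- choose optimal permutation
  obtain ⟨σ, -, hσ⟩ := Finset.exists_min_image (Finset.univ : Finset (Equiv.Perm (Fin n)))
    (fun τ => ∑ p, c p (τ p)) ⟨1, Finset.mem_univ 1⟩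
  have hσ' : ∀ τ : Equiv.Perm (Fin n), ∑ p, c p (σ p) ≤ ∑ p, c p (τ p) := fun τ =>
    hσ τ (Finset.mem_univ τ)
  -- the integral solution
  set x : Fin n → Fin n → Fin m → ℝ :=
    fun p q h => if q = σ p ∧ h = g p (σ p) then 1 else 0 with hx
  have hxobj : (∑ h : Fin m, ∑ p : Fin n, ∑ q : Fin n, D p q h * x p q h)
      = ∑ p, c p (σ p) := by
    rw [Finset.sum_comm]
    refine Finset.sum_congr rfl fun p _ => ?_
    rw [Finset.sum_comm]
    have : ∀ q, (∑ h : Fin m, D p q h * x p q h)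
        = if q = σ p then D p q (g p (σ p)) else 0 := by
      intro q
      simp only [hx, mul_ite, mul_one, mul_zero, ite_and]
      by_cases hq : q = σ p
      · simp [hq]
      · simp [hq]
    simp only [this, Finset.sum_ite_eq' Finset.univ (σ p), Finset.mem_univ, if_true]
    exact hg p (σ p)
  refine ⟨x, ?_, ?_, ?_⟩
  · -- feasibility
    rw [hFeas]
    refine ⟨fun p q h => ?_, fun q => ?_, fun p => ?_⟩
    · simp only [hx]; split <;> norm_num
    · rw [Finset.sum_comm]
      have : ∀ p, (∑ h : Fin m, x p q h) = if q = σ p then 1 else 0 := by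
        intro p
        simp only [hx, ite_and]
        by_cases hq : q = σ p
        · simp [hq]
        · simp [hq]
      simp only [this]
      have : ∀ p, (q = σ p) = (σ.symm q = p) := by
        intro p
        rw [eq_comm (a := σ.symm q)]
        simp [Equiv.eq_symm_apply, eq_comm]
      simp only [this]
      simp
    · rw [Finset.sum_comm]
      have : ∀ q, (∑ h : Fin m, x p q h) = if q = σ p then 1 else 0 := by
        intro q
        simp only [hx, ite_and]
        by_cases hq : q = σ p
        · simp [hq]
        · simp [hq]
      simp [this]
  · intro p q h
    simp only [hx]; split <;> simp
  · -- optimality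
    intro y hy
    rw [hFeas] at hy
    obtain ⟨hy01, hycol, hyrow⟩ := hy
    rw [hxobj]
    -- the marginal matrix
    set M : Matrix (Fin n) (Fin n) ℝ := fun p q => ∑ h, y p q h with hM
    have hMds : M ∈ doublyStochastic ℝ (Fin n) := by
      rw [mem_doublyStochastic_iff_sum]
      refine ⟨fun p q => Finset.sum_nonneg fun h _ => (hy01 p q h).1, fun p => ?_, fun q => ?_⟩
      · rw [show (∑ q, M p q) = ∑ h, ∑ q, y p q h from Finset.sum_comm]
        exact hyrow p
      · rw [show (∑ p, M p q) = ∑ h, ∑ p, y p q h from Finset.sum_comm]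
        exact hycol q
    obtain ⟨w, hw0, hw1, hw2⟩ := exists_eq_sum_perm_of_mem_doublyStochastic hMds
    have hMentry : ∀ p q, M p q = ∑ τ : Equiv.Perm (Fin n), w τ * (if τ p = q then 1 else 0) := by
      intro p q
      rw [← hw2]
      simp [Matrix.sum_apply, Equiv.Perm.permMatrix, PEquiv.toMatrix_apply, Equiv.toPEquiv]
    -- step 1: objective(y) ≥ ∑ c p q * M p q
    have step1 : (∑ p, ∑ q, c p q * M p q)
        ≤ ∑ h : Fin m, ∑ p : Fin n, ∑ q : Fin n, D p q h * y p q h := by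
      have h1 : (∑ p, ∑ q, c p q * M p q) = ∑ p, ∑ q, ∑ h, c p q * y p q h := by
        refine Finset.sum_congr rfl fun p _ => Finset.sum_congr rfl fun q _ => ?_
        rw [hM]
        exact Finset.mul_sum _ _ _
      rw [h1, gap_sum_comm3]
      refine Finset.sum_le_sum fun h _ => Finset.sum_le_sum fun p _ =>
        Finset.sum_le_sum fun q _ => ?_
      exact mul_le_mul_of_nonneg_right (hcle p q h) (hy01 p q h).1
    -- step 2: ∑ c p q * M p q ≥ min over permutations
    have step2 : (∑ p, c p (σ p)) ≤ ∑ p, ∑ q, c p q * M p q := by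
      have expand : (∑ p, ∑ q, c p q * M p q)
          = ∑ τ : Equiv.Perm (Fin n), w τ * ∑ p, c p (τ p) := by
        have h1 : (∑ p, ∑ q, c p q * M p q)
            = ∑ p, ∑ q, ∑ τ : Equiv.Perm (Fin n), c p q * (w τ * if τ p = q then 1 else 0) := by
          refine Finset.sum_congr rfl fun p _ => Finset.sum_congr rfl fun q _ => ?_
          rw [hMentry]
          exact Finset.mul_sum _ _ _
        rw [h1, gap_sum_comm3]
        refine Finset.sum_congr rfl fun τ _ => ?_
        have h2 : ∀ p : Fin n,
            (∑ q, c p q * (w τ * if τ p = q then 1 else 0)) = w τ * c p (τ p) := by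
          intro p
          have hq : ∀ q : Fin n, c p q * (w τ * if τ p = q then 1 else 0)
              = if τ p = q then w τ * c p q else 0 := fun q => by
            split <;> simp_all <;> ring
          simp only [hq]
          simp
        simp only [h2]
        exact (Finset.mul_sum _ _ _).symm
      rw [expand]
      calc (∑ p, c p (σ p)) = ∑ τ : Equiv.Perm (Fin n), w τ * ∑ p, c p (σ p) := by
            rw [← Finset.sum_mul, hw1, one_mul]
        _ ≤ ∑ τ : Equiv.Perm (Fin n), w τ * ∑ p, c p (τ p) :=
            Finset.sum_le_sum fun τ _ => mul_le_mul_of_nonneg_left (hσ' τ) (hw0 τ)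
    exact step2.trans step1
end

section
/- A feasible GAP instance has an optimal solution of objective value k* if and only if there exists a minimum-cost maximum flow F* over the corresponding graph G* with cost(F*) = k*; moreover the optimal GAP solution is recovered as x_{pqh} = F*(n_{ph}, n_{qh}). -/
section

variable (P Q H : Type*) [Fintype P] [Fintype Q] [Fintype H]

/-- An integral valid flow over the GAP graph `G*`, given by its values on the
five layers of unit-capacity edges, satisfying capacity and conservation
constraints at every internal node. -/
structure GapFlow where
  a : P → ℕ
  b : P → H → ℕ
  mid : P → Q → H → ℕ
  c : Q → H → ℕ
  d : Q → ℕ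
  cap_a : ∀ p, a p ≤ 1
  cap_b : ∀ p h, b p h ≤ 1
  cap_mid : ∀ p q h, mid p q h ≤ 1
  cap_c : ∀ q h, c q h ≤ 1
  cap_d : ∀ q, d q ≤ 1
  cons_p : ∀ p, a p = ∑ h : H, b p h
  cons_ph : ∀ p h, b p h = ∑ q : Q, mid p q h
  cons_qh : ∀ q h, c q h = ∑ p : P, mid p q h
  cons_q : ∀ q, d q = ∑ h : H, c q h

variable {P Q H}

/-- The value of a flow: total flow out of the source `s`. -/
def GapFlow.value (F : GapFlow P Q H) : ℕ := ∑ p : P, F.a p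

/-- The cost of a flow: edge costs are `D_{pq}(θ_h)` on middle edges, `0`
elsewhere. -/
def GapFlow.cost (D : P → Q → H → ℝ) (F : GapFlow P Q H) : ℝ :=
  ∑ p : P, ∑ q : Q, ∑ h : H, D p q h * (F.mid p q h : ℝ)

/-- A maximum flow. -/
def GapFlow.IsMaxFlow (F : GapFlow P Q H) : Prop :=
  ∀ F' : GapFlow P Q H, F'.value ≤ F.value

/-- A minimum-cost maximum flow. -/
def GapFlow.IsMinCostMaxFlow (D : P → Q → H → ℝ) (F : GapFlow P Q H) : Prop :=
  F.IsMaxFlow ∧ ∀ F' : GapFlow P Q H, F'.IsMaxFlow → F.cost D ≤ F'.cost D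

/-- Feasibility for GAP: a binary assignment matching each left feature to
exactly one right feature under exactly one model, and vice versa. -/
def GapFeasible (x : P → Q → H → ℕ) : Prop :=
  (∀ p q h, x p q h ≤ 1) ∧
  (∀ p : P, ∑ h : H, ∑ q : Q, x p q h = 1) ∧
  (∀ q : Q, ∑ h : H, ∑ p : P, x p q h = 1)

/-- The GAP objective. -/
def gapObj (D : P → Q → H → ℝ) (x : P → Q → H → ℕ) : ℝ :=
  ∑ p : P, ∑ q : Q, ∑ h : H, D p q h * (x p q h : ℝ)

/-- An optimal GAP solution. -/
def GapOptimal (D : P → Q → H → ℝ) (x : P → Q → H → ℕ) : Prop :=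
  GapFeasible x ∧ ∀ y, GapFeasible y → gapObj D x ≤ gapObj D y

/-- Build a flow from a feasible GAP solution. -/
def mkFlow (x : P → Q → H → ℕ) (hx : GapFeasible x) : GapFlow P Q H where
  a _ := 1
  b p h := ∑ q : Q, x p q h
  mid := x
  c q h := ∑ p : P, x p q h
  d _ := 1
  cap_a _ := le_refl 1
  cap_b p h := (Finset.single_le_sum (f := fun h => ∑ q : Q, x p q h)
    (fun _ _ => Nat.zero_le _) (Finset.mem_univ h)).trans_eq (hx.2.1 p)
  cap_mid p q h := hx.1 p q h
  cap_c q h := (Finset.single_le_sum (f := fun h => ∑ p : P, x p q h)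
    (fun _ _ => Nat.zero_le _) (Finset.mem_univ h)).trans_eq (hx.2.2 q)
  cap_d _ := le_refl 1
  cons_p p := (hx.2.1 p).symm
  cons_ph _ _ := rfl
  cons_qh _ _ := rfl
  cons_q q := (hx.2.2 q).symm

lemma mkFlow_value (x : P → Q → H → ℕ) (hx : GapFeasible x) :
    (mkFlow x hx).value = Fintype.card P := by
  simp [mkFlow, GapFlow.value]

lemma value_le (F : GapFlow P Q H) : F.value ≤ Fintype.card P := by
  calc F.value ≤ ∑ _p : P, 1 := Finset.sum_le_sum fun p _ => F.cap_a p
  _ = Fintype.card P := by simp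

lemma sum_d_eq (F : GapFlow P Q H) : ∑ q : Q, F.d q = F.value := by
  calc ∑ q : Q, F.d q
      = ∑ q : Q, ∑ h : H, ∑ p : P, F.mid p q h := by
        exact Finset.sum_congr rfl fun q _ => by
          rw [F.cons_q]; exact Finset.sum_congr rfl fun h _ => F.cons_qh q h
    _ = ∑ h : H, ∑ q : Q, ∑ p : P, F.mid p q h := Finset.sum_comm
    _ = ∑ h : H, ∑ p : P, ∑ q : Q, F.mid p q h :=
        Finset.sum_congr rfl fun h _ => Finset.sum_comm
    _ = ∑ p : P, ∑ h : H, ∑ q : Q, F.mid p q h := Finset.sum_comm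
    _ = F.value := by
        exact (Finset.sum_congr rfl fun p _ => by
          rw [F.cons_p]; exact Finset.sum_congr rfl fun h _ => F.cons_ph p h).symm

lemma maxFlow_value (hfeasible : ∃ x : P → Q → H → ℕ, GapFeasible x)
    (F : GapFlow P Q H) (hF : F.IsMaxFlow) : F.value = Fintype.card P := by
  obtain ⟨x, hx⟩ := hfeasible
  exact le_antisymm (value_le F) ((mkFlow_value x hx).symm.trans_le (hF (mkFlow x hx)))

lemma maxFlow_a (F : GapFlow P Q H) (hv : F.value = Fintype.card P) (p : P) :
    F.a p = 1 := by
  have h : ∑ p : P, F.a p = ∑ _p : P, 1 := by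
    rw [← GapFlow.value, hv]; simp
  exact ((Finset.sum_eq_sum_iff_of_le (fun p _ => F.cap_a p)).mp h p (Finset.mem_univ p))

lemma maxFlow_d (hcard : Fintype.card P = Fintype.card Q)
    (F : GapFlow P Q H) (hv : F.value = Fintype.card P) (q : Q) :
    F.d q = 1 := by
  have h : ∑ q : Q, F.d q = ∑ _q : Q, 1 := by
    rw [sum_d_eq, hv, hcard]; simp
  exact ((Finset.sum_eq_sum_iff_of_le (fun q _ => F.cap_d q)).mp h q (Finset.mem_univ q))

lemma maxFlow_mid_feasible (hcard : Fintype.card P = Fintype.card Q)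
    (hfeasible : ∃ x : P → Q → H → ℕ, GapFeasible x)
    (F : GapFlow P Q H) (hF : F.IsMaxFlow) : GapFeasible F.mid := by
  have hv := maxFlow_value hfeasible F hF
  refine ⟨F.cap_mid, fun p => ?_, fun q => ?_⟩
  · simp only [← F.cons_ph, ← F.cons_p]; exact maxFlow_a F hv p
  · simp only [← F.cons_qh, ← F.cons_q]; exact maxFlow_d hcard F hv q

lemma cost_eq (D : P → Q → H → ℝ) (F : GapFlow P Q H) :
    F.cost D = gapObj D F.mid := rfl

lemma mkFlow_isMax (x : P → Q → H → ℕ) (hx : GapFeasible x) :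
    (mkFlow x hx).IsMaxFlow := fun F' => (value_le F').trans (mkFlow_value x hx).ge

/-- A feasible GAP instance has an optimal solution of objective value `k*` iff
there is a minimum-cost maximum flow `F*` over `G*` with `cost(F*) = k*`;
moreover the optimal GAP solution is recovered as `x_{pqh} = F*(n_{ph},n_{qh})`. -/
theorem gap_optimum_iff_minCostMaxFlow
    (hcard : Fintype.card P = Fintype.card Q)
    (D : P → Q → H → ℝ)
    (hfeasible : ∃ x : P → Q → H → ℕ, GapFeasible x) :
    (∀ k : ℝ,
      ((∃ x, GapOptimal D x ∧ gapObj D x = k) ↔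
        (∃ F : GapFlow P Q H, F.IsMinCostMaxFlow D ∧ F.cost D = k))) ∧
    (∀ F : GapFlow P Q H, F.IsMinCostMaxFlow D → GapOptimal D F.mid) := by
  have key : ∀ F : GapFlow P Q H, F.IsMinCostMaxFlow D → GapOptimal D F.mid := by
    intro F hF
    refine ⟨maxFlow_mid_feasible hcard hfeasible F hF.1, fun y hy => ?_⟩
    rw [← cost_eq]
    exact (hF.2 (mkFlow y hy) (mkFlow_isMax y hy)).trans_eq (cost_eq D (mkFlow y hy))
  refine ⟨fun k => ⟨?_, ?_⟩, key⟩
  · rintro ⟨x, hx, rfl⟩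
    refine ⟨mkFlow x hx.1, ⟨mkFlow_isMax x hx.1, fun F' hF' => ?_⟩, rfl⟩
    rw [cost_eq, cost_eq]
    exact hx.2 F'.mid (maxFlow_mid_feasible hcard hfeasible F' hF')
  · rintro ⟨F, hF, rfl⟩
    exact ⟨F.mid, key F hF, rfl⟩

end
end
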